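/- The image of □^N(π) × Δ^N(r) under the map Ψ(x₁,y₁,…,x_N,y_N) = (√y₁ cos(2x₁), −√y₁ sin(2x₁), …, √y_N cos(2x_N), −√y_N sin(2x_N)) equals B^{2N}(r) ∩ SD^N(r), where B^{2N}(r) is the open ball of radius √r in ℝ^{2N} and SD^N(r) is the N-fold product of slit discs SD(r) = {(u,v) ∈ ℝ² : u² + v² < r} \ {(u,0) : u ≥ 0}. -/

import Mathlib

lemma psi_sq_add_sq (y x : ℝ) (hy : 0 ≤ y) :
    (Real.sqrt y * Real.cos (2 * x)) ^ 2 + (-(Real.sqrt y * Real.sin (2 * x))) ^ 2 = y := by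
  nlinarith [Real.sq_sqrt hy, Real.sin_sq_add_cos_sq (2 * x)]

lemma psi_slit (y x : ℝ) (hy : 0 < y) (hx0 : 0 < x) (hxp : x < Real.pi) :
    ¬(-(Real.sqrt y * Real.sin (2 * x)) = 0 ∧ 0 ≤ Real.sqrt y * Real.cos (2 * x)) := by
  rintro ⟨h1, h2⟩
  have hs : 0 < Real.sqrt y := Real.sqrt_pos.mpr hy
  have hsin : Real.sin (2 * x) = 0 := by
    have := neg_eq_zero.mp h1
    exact (mul_eq_zero.mp this).resolve_left (ne_of_gt hs)
  have hsx : 0 < Real.sin x := Real.sin_pos_of_pos_of_lt_pi hx0 hxp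
  have hcx : Real.cos x = 0 := by
    rw [Real.sin_two_mul] at hsin
    rcases mul_eq_zero.mp hsin with h | h
    · rcases mul_eq_zero.mp h with h | h
      · norm_num at h
      · exact absurd h (ne_of_gt hsx)
    · exact h
  have hc2 : Real.cos (2 * x) = -1 := by
    rw [Real.cos_two_mul, hcx]; ring
  rw [hc2] at h2
  nlinarith

lemma exists_angle (u v : ℝ) (h : ¬(v = 0 ∧ 0 ≤ u)) :
    ∃ x : ℝ, 0 < x ∧ x < Real.pi ∧
      Real.sqrt (u ^ 2 + v ^ 2) * Real.cos (2 * x) = u ∧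
      -(Real.sqrt (u ^ 2 + v ^ 2) * Real.sin (2 * x)) = v := by
  set z : ℂ := ⟨u, -v⟩ with hzdef
  have hz0 : z ≠ 0 := by
    intro h0
    apply h
    have hre : u = 0 := congrArg Complex.re h0
    have him : -v = 0 := congrArg Complex.im h0
    exact ⟨by linarith, le_of_eq hre.symm⟩
  have habs : ‖z‖ = Real.sqrt (u ^ 2 + v ^ 2) := by
    rw [Complex.norm_def, Complex.normSq_apply]
    norm_num [hzdef]
    ring_nf
  have habs_pos : 0 < ‖z‖ := norm_pos_iff.mpr hz0
  have hcos : Real.cos (Complex.arg z) = u / ‖z‖ := by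
    rw [Complex.cos_arg hz0]
  have hsin : Real.sin (Complex.arg z) = -v / ‖z‖ := by
    rw [Complex.sin_arg]
  have harg_ne : Complex.arg z ≠ 0 := by
    intro h0
    rw [Complex.arg_eq_zero_iff] at h0
    exact h ⟨by have := h0.2; simpa using (neg_eq_zero.mp this), h0.1⟩
  have hple : Complex.arg z ≤ Real.pi := Complex.arg_le_pi z
  have hpgt : -Real.pi < Complex.arg z := Complex.neg_pi_lt_arg z
  rcases lt_or_gt_of_ne harg_ne with hneg | hpos
  · refine ⟨Complex.arg z / 2 + Real.pi, by linarith [Real.pi_pos], by linarith, ?_, ?_⟩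
    · have : 2 * (Complex.arg z / 2 + Real.pi) = Complex.arg z + 2 * Real.pi := by ring
      rw [this, Real.cos_add_two_pi, hcos, ← habs]
      field_simp
    · have : 2 * (Complex.arg z / 2 + Real.pi) = Complex.arg z + 2 * Real.pi := by ring
      rw [this, Real.sin_add_two_pi, hsin, ← habs]
      field_simp
  · refine ⟨Complex.arg z / 2, by linarith, by linarith [Real.pi_pos], ?_, ?_⟩
    · have : 2 * (Complex.arg z / 2) = Complex.arg z := by ring
      rw [this, hcos, ← habs]
      field_simp
    · have : 2 * (Complex.arg z / 2) = Complex.arg z := by ring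
      rw [this, hsin, ← habs]
      field_simp

/-- The image of □^N(π) × Δ^N(r) under Ψ equals B^{2N}(r) ∩ SD^N(r), where SD(r) is
the open disc of radius √r with the nonnegative real axis removed. -/
theorem psi_image (N : ℕ) (r : ℝ) :
    (fun p : (Fin N → ℝ) × (Fin N → ℝ) => fun i : Fin N =>
        (Real.sqrt (p.2 i) * Real.cos (2 * p.1 i),
          -(Real.sqrt (p.2 i) * Real.sin (2 * p.1 i)))) ''
      {p : (Fin N → ℝ) × (Fin N → ℝ) |
        (∀ i, 0 < p.1 i ∧ p.1 i < Real.pi) ∧ (∀ i, 0 < p.2 i) ∧ ∑ i, p.2 i < r}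
    = {u : Fin N → ℝ × ℝ |
        (∑ i, ((u i).1 ^ 2 + (u i).2 ^ 2)) < r ∧
        ∀ i, ((u i).1 ^ 2 + (u i).2 ^ 2 < r ∧ ¬((u i).2 = 0 ∧ 0 ≤ (u i).1))} := by
  ext u
  constructor
  · rintro ⟨⟨x, y⟩, ⟨hx, hy, hsum⟩, rfl⟩
    simp only [Set.mem_setOf_eq]
    have hkey : ∀ i : Fin N,
        ((Real.sqrt (y i) * Real.cos (2 * x i)) ^ 2
          + (-(Real.sqrt (y i) * Real.sin (2 * x i))) ^ 2) = y i :=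
      fun i => psi_sq_add_sq (y i) (x i) (le_of_lt (hy i))
    have hsum' : ∑ i, ((Real.sqrt (y i) * Real.cos (2 * x i)) ^ 2
        + (-(Real.sqrt (y i) * Real.sin (2 * x i))) ^ 2) = ∑ i, y i :=
      Finset.sum_congr rfl fun i _ => hkey i
    refine ⟨by rw [hsum']; exact hsum, fun i => ⟨?_, ?_⟩⟩
    · rw [hkey i]
      calc y i ≤ ∑ j, y j :=
            Finset.single_le_sum (fun j _ => le_of_lt (hy j)) (Finset.mem_univ i)
        _ < r := hsum
    · exact psi_slit (y i) (x i) (hy i) (hx i).1 (hx i).2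
  · rintro ⟨hsum, hslit⟩
    choose x hx1 hx2 hx3 hx4 using fun i => exists_angle (u i).1 (u i).2 (hslit i).2
    refine ⟨(x, fun i => (u i).1 ^ 2 + (u i).2 ^ 2), ⟨fun i => ⟨hx1 i, hx2 i⟩, fun i => ?_, hsum⟩, ?_⟩
    · by_contra hle
      push_neg at hle
      have hle' : (u i).1 ^ 2 + (u i).2 ^ 2 ≤ 0 := hle
      have h1 : (u i).1 = 0 := by nlinarith [sq_nonneg (u i).1, sq_nonneg (u i).2, hle']
      have h2 : (u i).2 = 0 := by nlinarith [sq_nonneg (u i).1, sq_nonneg (u i).2, hle']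
      exact (hslit i).2 ⟨h2, le_of_eq h1.symm⟩
    · funext i
      exact Prod.ext (hx3 i) (hx4 i)
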